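/- Let X and A be finite nonempty sets, γ ∈ [0,1), c : X → A → ℝ, and P : X → A → X → ℝ a transition kernel with P(x,a,x') ≥ 0 and ∑_{x'} P(x,a,x') = 1 for all x, a. Let κ ∈ ℕ, θ₀ ∈ ℝ^κ, and π : ℝ^κ → X → A → ℝ be such that for all θ, x: π(θ,x,·) ≥ 0 and ∑_a π(θ,x,a) = 1, and for each x, a the map θ ↦ π(θ,x,a) is differentiable at θ₀. Define P_θ(x,x') = ∑_a π(θ,x,a)·P(x,a,x'), c_θ(x) = ∑_a π(θ,x,a)·c(x,a), and V_θ = (I − γ·P_θ)⁻¹·c_θ. Fix x₀ ∈ X and set μ(x) = ((I − γ·P_{θ₀})⁻¹)(x₀, x) and Q(x,a) = c(x,a) + γ·∑_{x'} P(x,a,x')·V_{θ₀}(x'). Then θ ↦ V_θ(x₀) is differentiable at θ₀ and its derivative (a linear functional on ℝ^κ) equals ∑_{x ∈ X} μ(x)·∑_{a ∈ A} Q(x,a)·D_θ(π(θ,x,a))|_{θ = θ₀}. -/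

import Mathlib

lemma det_diffAt {n : Type*} [Fintype n] [DecidableEq n] {E : Type*}
    [NormedAddCommGroup E] [NormedSpace ℝ E] {M : E → Matrix n n ℝ} {x : E}
    (h : ∀ i j, DifferentiableAt ℝ (fun e => M e i j) x) :
    DifferentiableAt ℝ (fun e => (M e).det) x := by
  simp only [Matrix.det_apply']
  apply DifferentiableAt.fun_sum; intro σ _
  have : DifferentiableAt ℝ (fun e => ∏ i, M e (σ i) i) x :=
    (HasFDerivAt.finset_prod (fun i _ => (h (σ i) i).hasFDerivAt)).differentiableAt
  exact this.const_mul _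

lemma adj_diffAt {n : Type*} [Fintype n] [DecidableEq n] {E : Type*}
    [NormedAddCommGroup E] [NormedSpace ℝ E] {M : E → Matrix n n ℝ} {x : E}
    (h : ∀ i j, DifferentiableAt ℝ (fun e => M e i j) x) (i j : n) :
    DifferentiableAt ℝ (fun e => (M e).adjugate i j) x := by
  simp only [Matrix.adjugate_apply]
  apply det_diffAt
  intro k l
  simp only [Matrix.updateRow_apply]
  by_cases hk : k = j
  · simp [hk]
  · simp only [hk, if_false]; exact h k l

theorem policy_gradient_theorem {X A : Type*}
    [Fintype X] [DecidableEq X] [Nonempty X] [Fintype A] [Nonempty A]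
    (γ : ℝ) (hγ0 : 0 ≤ γ) (hγ1 : γ < 1)
    (c : X → A → ℝ) (P : X → A → X → ℝ)
    (hP0 : ∀ x a x', 0 ≤ P x a x') (hP1 : ∀ x a, ∑ x', P x a x' = 1)
    (κ : ℕ) (θ₀ : Fin κ → ℝ) (π : (Fin κ → ℝ) → X → A → ℝ)
    (hπ0 : ∀ θ x a, 0 ≤ π θ x a) (hπ1 : ∀ θ x, ∑ a, π θ x a = 1)
    (hdiff : ∀ x a, DifferentiableAt ℝ (fun θ => π θ x a) θ₀)
    (Pmat : (Fin κ → ℝ) → Matrix X X ℝ)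
    (hPmat : ∀ θ x x', Pmat θ x x' = ∑ a, π θ x a * P x a x')
    (cvec : (Fin κ → ℝ) → X → ℝ)
    (hcvec : ∀ θ x, cvec θ x = ∑ a, π θ x a * c x a)
    (V : (Fin κ → ℝ) → X → ℝ)
    (hV : ∀ θ, V θ = (1 - γ • Pmat θ)⁻¹.mulVec (cvec θ))
    (x₀ : X) (μ : X → ℝ) (hμ : ∀ x, μ x = (1 - γ • Pmat θ₀)⁻¹ x₀ x)
    (Q : X → A → ℝ)
    (hQ : ∀ x a, Q x a = c x a + γ * ∑ x', P x a x' * V θ₀ x') :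
    DifferentiableAt ℝ (fun θ => V θ x₀) θ₀ ∧
    fderiv ℝ (fun θ => V θ x₀) θ₀ =
      ∑ x, ∑ a, (μ x * Q x a) • fderiv ℝ (fun θ => π θ x a) θ₀ := by
  classical
  have hPm0 : ∀ θ x x', 0 ≤ Pmat θ x x' := fun θ x x' => by
    rw [hPmat]; exact Finset.sum_nonneg fun a _ => mul_nonneg (hπ0 θ x a) (hP0 x a x')
  have hPm1 : ∀ θ x, ∑ x', Pmat θ x x' = 1 := fun θ x => by
    rw [Finset.sum_congr rfl fun x' _ => hPmat θ x x', Finset.sum_comm]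
    simp_rw [← Finset.mul_sum, hP1, mul_one]
    exact hπ1 θ x
  -- invertibility of 1 - γ • Pmat θ
  have hdet : ∀ θ, IsUnit (1 - γ • Pmat θ).det := by
    intro θ
    rw [isUnit_iff_ne_zero]
    intro h0
    obtain ⟨v, hv0, hv⟩ := (Matrix.exists_mulVec_eq_zero_iff).2 h0
    have hvx : ∀ x, v x = γ * ∑ x', Pmat θ x x' * v x' := by
      intro x
      have h1 := congrFun hv x
      rw [Matrix.sub_mulVec, Matrix.smul_mulVec] at h1
      simp only [Pi.sub_apply, Pi.smul_apply, Matrix.one_mulVec, smul_eq_mul, Pi.zero_apply,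
        sub_eq_zero] at h1
      rw [h1]; rfl
    obtain ⟨z, -, hz⟩ := Finset.exists_max_image Finset.univ (fun x => |v x|)
      ⟨Classical.arbitrary X, Finset.mem_univ _⟩
    have h1 : |v z| ≤ γ * |v z| := by
      calc |v z| = γ * |∑ x', Pmat θ z x' * v x'| := by
            rw [hvx z, abs_mul, abs_of_nonneg hγ0]
        _ ≤ γ * ∑ x', Pmat θ z x' * |v z| := by
            apply mul_le_mul_of_nonneg_left _ hγ0
            refine (Finset.abs_sum_le_sum_abs _ _).trans (Finset.sum_le_sum fun x' _ => ?_)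
            rw [abs_mul, abs_of_nonneg (hPm0 θ z x')]
            exact mul_le_mul_of_nonneg_left (hz x' (Finset.mem_univ _)) (hPm0 θ z x')
        _ = γ * |v z| := by rw [← Finset.sum_mul, hPm1, one_mul]
    have hz0 : |v z| = 0 := le_antisymm (by nlinarith [abs_nonneg (v z)]) (abs_nonneg _)
    apply hv0
    funext x
    have hx := (hz x (Finset.mem_univ _)).trans hz0.le
    exact abs_nonpos_iff.1 hx
  -- fixed point equation
  have hfix : ∀ θ x, V θ x = cvec θ x + γ * ∑ x', Pmat θ x x' * V θ x' := by
    intro θ x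
    have hMz : (1 - γ • Pmat θ).mulVec (V θ) = cvec θ := by
      rw [hV, Matrix.mulVec_mulVec, Matrix.mul_nonsing_inv _ (hdet θ), Matrix.one_mulVec]
    have h1 := congrFun hMz x
    rw [Matrix.sub_mulVec, Matrix.smul_mulVec] at h1
    simp only [Pi.sub_apply, Pi.smul_apply, Matrix.one_mulVec, smul_eq_mul] at h1
    have h2 : (Pmat θ).mulVec (V θ) x = ∑ x', Pmat θ x x' * V θ x' := rfl
    rw [h2] at h1
    linarith
  -- differentiability of entries
  have hPd : ∀ x x', DifferentiableAt ℝ (fun θ => Pmat θ x x') θ₀ := by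
    intro x x'
    simp only [hPmat]
    exact DifferentiableAt.fun_sum fun a _ => (hdiff x a).mul_const _
  have hcd : ∀ x, DifferentiableAt ℝ (fun θ => cvec θ x) θ₀ := by
    intro x
    simp only [hcvec]
    exact DifferentiableAt.fun_sum fun a _ => (hdiff x a).mul_const _
  have hFd : ∀ x x', DifferentiableAt ℝ (fun θ => (1 - γ • Pmat θ) x x') θ₀ := by
    intro x x'
    have he : (fun θ => (1 - γ • Pmat θ) x x')
        = fun θ => (1 : Matrix X X ℝ) x x' - γ * Pmat θ x x' := by
      funext θ
      simp [Matrix.sub_apply, Matrix.smul_apply, smul_eq_mul]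
    rw [he]
    exact (differentiableAt_const _).sub ((hPd x x').const_mul γ)
  have hdetd : DifferentiableAt ℝ (fun θ => (1 - γ • Pmat θ).det) θ₀ := det_diffAt hFd
  have hdetne : (1 - γ • Pmat θ₀).det ≠ 0 := (hdet θ₀).ne_zero
  have hVd : ∀ x, DifferentiableAt ℝ (fun θ => V θ x) θ₀ := by
    intro x
    have hrepr : (fun θ => V θ x)
        = fun θ => ((1 - γ • Pmat θ).det)⁻¹
            * ∑ y, (1 - γ • Pmat θ).adjugate x y * cvec θ y := by
      funext θ
      rw [hV, Matrix.inv_def]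
      simp [Matrix.mulVec, dotProduct, Matrix.smul_apply, smul_eq_mul,
        Finset.mul_sum, mul_assoc, Ring.inverse_eq_inv']
    rw [hrepr]
    exact (hdetd.inv hdetne).mul
      (DifferentiableAt.fun_sum fun y _ => (adj_diffAt hFd x y).mul (hcd y))
  refine ⟨hVd x₀, ?_⟩
  set D : X → A → (Fin κ → ℝ) →L[ℝ] ℝ :=
    fun x a => fderiv ℝ (fun θ => π θ x a) θ₀ with hD
  set dV : X → (Fin κ → ℝ) →L[ℝ] ℝ :=
    fun x => fderiv ℝ (fun θ => V θ x) θ₀ with hdV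
  have hπ' : ∀ x a, HasFDerivAt (fun θ => π θ x a) (D x a) θ₀ :=
    fun x a => (hdiff x a).hasFDerivAt
  have hV' : ∀ x, HasFDerivAt (fun θ => V θ x) (dV x) θ₀ := fun x => (hVd x).hasFDerivAt
  have key : ∀ x, dV x = (∑ a, c x a • D x a)
      + γ • (∑ x', ((∑ a, π θ₀ x a * P x a x') • dV x'
          + V θ₀ x' • (∑ a, P x a x' • D x a))) := by
    intro x
    have hg : HasFDerivAt
        (fun θ => (∑ a, π θ x a * c x a) + γ * ∑ x', (∑ a, π θ x a * P x a x') * V θ x')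
        ((∑ a, c x a • D x a)
          + γ • (∑ x', ((∑ a, π θ₀ x a * P x a x') • dV x'
              + V θ₀ x' • (∑ a, P x a x' • D x a)))) θ₀ := by
      apply HasFDerivAt.add
      · exact HasFDerivAt.fun_sum fun a _ => (hπ' x a).mul_const _
      · exact HasFDerivAt.const_mul (HasFDerivAt.fun_sum fun x' _ =>
          (HasFDerivAt.fun_sum fun a _ => (hπ' x a).mul_const _).mul (hV' x')) γ
    have he : (fun θ => V θ x)
        = fun θ => (∑ a, π θ x a * c x a) + γ * ∑ x', (∑ a, π θ x a * P x a x') * V θ x' := by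
      funext θ
      rw [hfix θ x, hcvec]
      congr 1
      congr 1
      exact Finset.sum_congr rfl fun x' _ => by rw [hPmat]
    rw [hdV]
    simp only [he]
    exact hg.fderiv
  -- apply to a vector and solve the linear system
  refine ContinuousLinearMap.ext fun u => ?_
  set w : X → ℝ := fun x => dV x u with hw
  set ρ : X → ℝ := fun x => ∑ a, Q x a * (D x a u) with hρ
  have hweq : ∀ x, w x = ρ x + γ * ∑ x', Pmat θ₀ x x' * w x' := by
    intro x
    have h1 := congrArg (fun (L : (Fin κ → ℝ) →L[ℝ] ℝ) => L u) (key x)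
    simp only [ContinuousLinearMap.add_apply, ContinuousLinearMap.sum_apply,
      ContinuousLinearMap.smul_apply, smul_eq_mul] at h1
    show dV x u = (∑ a, Q x a * (D x a u)) + γ * ∑ x', Pmat θ₀ x x' * (dV x' u)
    rw [h1]
    simp only [hQ, hPmat, add_mul, Finset.sum_add_distrib, mul_add, Finset.mul_sum]
    have hsw : ∑ x' : X, ∑ a : A, γ * (V θ₀ x' * (P x a x' * (D x a u)))
        = ∑ a : A, (∑ x' : X, γ * (P x a x' * V θ₀ x')) * (D x a u) := by
      rw [Finset.sum_comm]
      refine Finset.sum_congr rfl fun a _ => ?_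
      rw [Finset.sum_mul]
      exact Finset.sum_congr rfl fun x' _ => by ring
    rw [hsw]
    ring
  have hmul : (1 - γ • Pmat θ₀).mulVec w = ρ := by
    funext x
    rw [Matrix.sub_mulVec, Matrix.smul_mulVec]
    simp only [Pi.sub_apply, Pi.smul_apply, Matrix.one_mulVec, smul_eq_mul]
    have h2 : (Pmat θ₀).mulVec w x = ∑ x', Pmat θ₀ x x' * w x' := rfl
    rw [h2]
    have := hweq x
    linarith
  have hwsol : w = (1 - γ • Pmat θ₀)⁻¹.mulVec ρ := by
    rw [← hmul, Matrix.mulVec_mulVec, Matrix.nonsing_inv_mul _ (hdet θ₀), Matrix.one_mulVec]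
  have hL : dV x₀ u = ∑ x, μ x * ρ x := by
    have h0 : dV x₀ u = (1 - γ • Pmat θ₀)⁻¹.mulVec ρ x₀ := congrFun hwsol x₀
    rw [h0]
    have h2 : (1 - γ • Pmat θ₀)⁻¹.mulVec ρ x₀ = ∑ x, (1 - γ • Pmat θ₀)⁻¹ x₀ x * ρ x := rfl
    rw [h2]
    exact Finset.sum_congr rfl fun x _ => by rw [hμ]
  calc (fderiv ℝ (fun θ => V θ x₀) θ₀) u = dV x₀ u := rfl
    _ = ∑ x, μ x * ρ x := hL
    _ = (∑ x, ∑ a, (μ x * Q x a) • D x a) u := by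
        simp only [ContinuousLinearMap.sum_apply, ContinuousLinearMap.smul_apply,
          smul_eq_mul, hρ, Finset.mul_sum]
        exact Finset.sum_congr rfl fun x _ => Finset.sum_congr rfl fun a _ => by ring
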